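/- Let Ψ = (f,g) : ℝⁿ → ℝ² where f(x) = ς(1 − ‖x − e₁‖²) and g(x) = ς(4 − ‖x − 2e₁‖²), with ς(t) = e^{−1/t} for t>0 and 0 otherwise. Then the critical set of Ψ equals {x : ‖x − e₁‖ ≥ 1} ∪ {x : x₂ = ⋯ = xₙ = 0}. -/

import Mathlib

/-- The smooth cutoff `ς(t) = e^{-1/t}` for `t > 0`, `ς(t) = 0` for `t ≤ 0`. -/
noncomputable def varsigma (t : ℝ) : ℝ := if 0 < t then Real.exp (-1 / t) else 0

lemma varsigma_eq : varsigma = expNegInvGlue := by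
  funext t
  rw [varsigma, expNegInvGlue]
  rcases lt_or_ge 0 t with h | h
  · rw [if_pos h, if_neg (not_le.2 h), neg_div, one_div]
  · rw [if_neg (not_lt.2 h), if_pos h]

lemma varsigma_nonneg (t : ℝ) : 0 ≤ varsigma t := by
  rw [varsigma_eq]; exact expNegInvGlue.nonneg t

lemma varsigma_of_nonpos {t : ℝ} (h : t ≤ 0) : varsigma t = 0 := by
  rw [varsigma_eq]; exact expNegInvGlue.zero_of_nonpos h

lemma differentiable_varsigma : Differentiable ℝ varsigma := by
  rw [varsigma_eq]
  exact (expNegInvGlue.contDiff (n := 1)).differentiable (by norm_num)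

lemma hasDerivAt_varsigma {t : ℝ} (ht : 0 < t) :
    HasDerivAt varsigma (Real.exp (-1 / t) * (t ^ 2)⁻¹) t := by
  have h : HasDerivAt (fun s : ℝ => Real.exp (-(s⁻¹))) (Real.exp (-(t⁻¹)) * (t ^ 2)⁻¹) t := by
    simpa using ((hasDerivAt_inv ht.ne').neg).exp
  have := h.congr_of_eventuallyEq (f₁ := varsigma) ?_
  · simpa [neg_div, one_div] using this
  · filter_upwards [eventually_gt_nhds ht] with s hs
    rw [varsigma, if_pos hs, neg_div, one_div]

lemma varsigma_key {E : Type*} [NormedAddCommGroup E] [InnerProductSpace ℝ E]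
    (c : E) (r : ℝ) {x : E} (h : ‖x - c‖ ^ 2 < r) :
    ∃ a : ℝ, a < 0 ∧ HasFDerivAt (fun y => varsigma (r - ‖y - c‖ ^ 2))
      (a • innerSL ℝ (x - c)) x := by
  have hu : 0 < r - ‖x - c‖ ^ 2 := by linarith
  have h1 := ((hasFDerivAt_id x).sub_const c).norm_sq
  have h2 := h1.const_sub r
  have h3 := (hasDerivAt_varsigma hu).comp_hasFDerivAt x h2
  refine ⟨-(2 * (Real.exp (-1 / (r - ‖x - c‖ ^ 2)) * (((r - ‖x - c‖ ^ 2)) ^ 2)⁻¹)), ?_, ?_⟩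
  · have h4 : 0 < Real.exp (-1 / (r - ‖x - c‖ ^ 2)) * (((r - ‖x - c‖ ^ 2)) ^ 2)⁻¹ := by
      positivity
    linarith
  · refine h3.congr_fderiv ?_
    ext v
    simp [smul_smul]
    ring

/-- For `Ψ = (f,g) : ℝⁿ → ℝ²` with `f(x) = ς(1 − ‖x − e₁‖²)` and
`g(x) = ς(4 − ‖x − 2e₁‖²)`, the critical set of `Ψ` (points where the derivative is not
surjective) equals `{x : ‖x − e₁‖ ≥ 1} ∪ {x : x₂ = ⋯ = xₙ = 0}`. -/
theorem stmt19 {n : ℕ} [NeZero n] :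
    let e₁ : EuclideanSpace ℝ (Fin n) := EuclideanSpace.single 0 1
    let Ψ : EuclideanSpace ℝ (Fin n) → ℝ × ℝ := fun x =>
      (varsigma (1 - ‖x - e₁‖ ^ 2), varsigma (4 - ‖x - (2 : ℝ) • e₁‖ ^ 2))
    {x | ¬ Function.Surjective (fderiv ℝ Ψ x)} =
      {x | 1 ≤ ‖x - e₁‖} ∪
        {x : EuclideanSpace ℝ (Fin n) | ∀ i : Fin n, i ≠ 0 → x i = 0} := by
  intro e₁ Ψ
  have he₁ : ‖e₁‖ = 1 := by simp [e₁]
  ext x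
  simp only [Set.mem_union, Set.mem_setOf_eq]
  by_cases h1 : 1 ≤ ‖x - e₁‖
  · simp only [h1, true_or, iff_true]
    -- f has a local minimum at x, so its derivative vanishes
    have hdf : Differentiable ℝ (fun y : EuclideanSpace ℝ (Fin n) => varsigma (1 - ‖y - e₁‖ ^ 2)) :=
      differentiable_varsigma.comp
        (Differentiable.const_sub ((differentiable_id.sub_const e₁).norm_sq ℝ) 1)
    have hdg : Differentiable ℝ
        (fun y : EuclideanSpace ℝ (Fin n) => varsigma (4 - ‖y - (2 : ℝ) • e₁‖ ^ 2)) :=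
      differentiable_varsigma.comp
        (Differentiable.const_sub ((differentiable_id.sub_const ((2 : ℝ) • e₁)).norm_sq ℝ) 4)
    have hfx0 : fderiv ℝ (fun y : EuclideanSpace ℝ (Fin n) => varsigma (1 - ‖y - e₁‖ ^ 2)) x
        = 0 := by
      apply IsLocalMin.fderiv_eq_zero
      apply Filter.Eventually.of_forall
      intro y
      have hx : varsigma (1 - ‖x - e₁‖ ^ 2) = 0 :=
        varsigma_of_nonpos (by nlinarith [norm_nonneg (x - e₁)])
      show varsigma (1 - ‖x - e₁‖ ^ 2) ≤ varsigma (1 - ‖y - e₁‖ ^ 2)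
      rw [hx]
      exact varsigma_nonneg _
    have hΨ : fderiv ℝ Ψ x
        = (fderiv ℝ (fun y : EuclideanSpace ℝ (Fin n) => varsigma (1 - ‖y - e₁‖ ^ 2)) x).prod
          (fderiv ℝ (fun y : EuclideanSpace ℝ (Fin n) => varsigma (4 - ‖y - (2 : ℝ) • e₁‖ ^ 2)) x) :=
      DifferentiableAt.fderiv_prodMk (hdf x) (hdg x)
    intro hs
    obtain ⟨v, hv⟩ := hs (1, 0)
    rw [hΨ, hfx0] at hv
    have := congrArg Prod.fst hv
    simp at this
  · push_neg at h1
    -- derivative computation valid whenever ‖x - e₁‖ < 1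
    have hxe2 : ‖x - (2 : ℝ) • e₁‖ ^ 2 < 4 := by
      have hsub : x - (2 : ℝ) • e₁ = (x - e₁) - e₁ := by
        rw [two_smul]; abel
      have hle : ‖x - (2 : ℝ) • e₁‖ ≤ ‖x - e₁‖ + ‖e₁‖ := by
        rw [hsub]; exact norm_sub_le _ _
      rw [he₁] at hle
      nlinarith [norm_nonneg (x - (2 : ℝ) • e₁)]
    obtain ⟨a, ha, hfd⟩ := varsigma_key e₁ 1 (x := x) (by nlinarith [norm_nonneg (x - e₁)])
    obtain ⟨b, hb, hgd⟩ := varsigma_key ((2 : ℝ) • e₁) 4 (x := x) hxe2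
    have hΨd : HasFDerivAt Ψ ((a • innerSL ℝ (x - e₁)).prod
        (b • innerSL ℝ (x - (2 : ℝ) • e₁))) x := hfd.prodMk hgd
    have happ : ∀ v, fderiv ℝ Ψ x v
        = (a * inner ℝ (x - e₁) v, b * inner ℝ (x - (2 : ℝ) • e₁) v) := by
      intro v
      rw [hΨd.fderiv]
      simp only [ContinuousLinearMap.prod_apply, ContinuousLinearMap.coe_smul',
        Pi.smul_apply, innerSL_apply_apply, smul_eq_mul]
    have hu0 : (x - e₁) 0 = x 0 - 1 := by
      simp [e₁, EuclideanSpace.single_apply]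
    have hw0 : (x - (2 : ℝ) • e₁) 0 = x 0 - 2 := by
      simp [e₁, EuclideanSpace.single_apply]
    by_cases h2 : ∀ i : Fin n, i ≠ 0 → x i = 0
    · refine iff_of_true ?_ (Or.inr h2)
      -- x lies on the axis: both gradients are multiples of e₁
      have hu : x - e₁ = (x 0 - 1) • e₁ := by
        ext i
        by_cases hi : i = 0
        · subst hi; simp [e₁, EuclideanSpace.single_apply, hu0]
        · simp [e₁, EuclideanSpace.single_apply, hi, h2 i hi]
      have hw : x - (2 : ℝ) • e₁ = (x 0 - 2) • e₁ := by
        ext i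
        by_cases hi : i = 0
        · subst hi; simp [e₁, EuclideanSpace.single_apply, hw0]
        · simp [e₁, EuclideanSpace.single_apply, hi, h2 i hi]
      intro hs
      obtain ⟨v, hv⟩ := hs (1, 0)
      obtain ⟨v', hv'⟩ := hs (0, 1)
      rw [happ v, hu, hw] at hv
      rw [happ v', hu, hw] at hv'
      rw [real_inner_smul_left, real_inner_smul_left] at hv hv'
      obtain ⟨e1', e2'⟩ := Prod.mk.injEq .. ▸ hv
      obtain ⟨e3', e4'⟩ := Prod.mk.injEq .. ▸ hv'
      -- From e2' and e4', deduce ⟪e₁, v⟫ = 0, contradicting e1'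
      have key : (inner ℝ e₁ v : ℝ) = b * ((x 0 - 2) * inner ℝ e₁ v') * inner ℝ e₁ v := by
        rw [show b * ((x 0 - 2) * (inner ℝ e₁ v' : ℝ)) = 1 from e4']; ring
      rw [show b * ((x 0 - 2) * (inner ℝ e₁ v' : ℝ)) * inner ℝ e₁ v
          = (b * ((x 0 - 2) * inner ℝ e₁ v)) * inner ℝ e₁ v' from by ring, e2', zero_mul] at key
      rw [key, mul_zero, mul_zero] at e1'
      exact zero_ne_one e1'
    · have hrhs : ¬(1 ≤ ‖x - e₁‖ ∨ ∀ i : Fin n, i ≠ 0 → x i = 0) := by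
        push_neg
        exact ⟨h1, by push_neg at h2; exact h2⟩
      simp only [hrhs, iff_false, not_not]
      push_neg at h2
      obtain ⟨i, hi0, hxi⟩ := h2
      have hui : (x - e₁) i = x i := by
        simp [e₁, EuclideanSpace.single_apply, hi0]
      have hwi : (x - (2 : ℝ) • e₁) i = x i := by
        simp [e₁, EuclideanSpace.single_apply, hi0]
      rintro ⟨p, q⟩
      set s : ℝ := p / a - q / b with hs_def
      set t : ℝ := (p / a - s * (x 0 - 1)) / x i with ht_def
      refine ⟨s • e₁ + t • EuclideanSpace.single i (1 : ℝ), ?_⟩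
      rw [happ]
      rw [inner_add_right, inner_add_right, real_inner_smul_right, real_inner_smul_right,
        real_inner_smul_right, real_inner_smul_right]
      have i1 : (inner ℝ (x - e₁) e₁ : ℝ) = x 0 - 1 := by
        rw [show e₁ = EuclideanSpace.single 0 (1 : ℝ) from rfl,
          EuclideanSpace.inner_single_right]
        simp [hu0]
      have i2 : (inner ℝ (x - (2 : ℝ) • e₁) e₁ : ℝ) = x 0 - 2 := by
        rw [show e₁ = EuclideanSpace.single 0 (1 : ℝ) from rfl,
          EuclideanSpace.inner_single_right]
        simp [hw0]
      have i3 : (inner ℝ (x - e₁) (EuclideanSpace.single i (1 : ℝ)) : ℝ) = x i := by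
        rw [EuclideanSpace.inner_single_right]
        simp [hui]
      have i4 : (inner ℝ (x - (2 : ℝ) • e₁) (EuclideanSpace.single i (1 : ℝ)) : ℝ) = x i := by
        rw [EuclideanSpace.inner_single_right]
        simp [hwi]
      rw [i1, i2, i3, i4, Prod.mk.injEq]
      constructor
      · rw [ht_def, div_mul_cancel₀ _ hxi]
        rw [show s * (x 0 - 1) + (p / a - s * (x 0 - 1)) = p / a from by ring]
        rw [mul_div_assoc']
        exact mul_div_cancel_left₀ p ha.ne
      · rw [ht_def, div_mul_cancel₀ _ hxi]
        rw [show s * (x 0 - 2) + (p / a - s * (x 0 - 1)) = p / a - s from by ring, hs_def,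
          show p / a - (p / a - q / b) = q / b from by ring]
        rw [mul_div_assoc']
        exact mul_div_cancel_left₀ q hb.ne
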